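/- Let q be a power of a prime, let F be the finite field with q² elements, and let 2 ≤ d ≤ q. Then the number of codewords of weight exactly d of the corner code H^0_d equals q²·(q² − 1)·C(q, d−1)·(q³ − d + 1)/d, where C(q,d−1) is the binomial coefficient. -/

import Mathlib

set_option maxHeartbeats 1000000
set_option linter.unusedSectionVars false

open Finset Polynomial


/-- `z : F × F → F` is a codeword of the Hermitian code `H^j_d`: it vanishes outside the
Hermitian curve `x^(q+1) = y^q + y` and is orthogonal to the evaluations of the monomials
`x^r y^s` with `r + s ≤ d - 2` or `(r, s) = (d - 1 - i, i)` for some `0 ≤ i < j`. -/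
def hermitianCodeword (q d j : ℕ) {F : Type*} [Field F] [Fintype F] [DecidableEq F]
    (z : F × F → F) : Prop :=
  (∀ p : F × F, p.1 ^ (q + 1) ≠ p.2 ^ q + p.2 → z p = 0) ∧
  ∀ r s : ℕ, (r + s ≤ d - 2 ∨ ∃ i < j, r = d - 1 - i ∧ s = i) →
    ∑ p ∈ Finset.univ.filter (fun p : F × F => p.1 ^ (q + 1) = p.2 ^ q + p.2),
      z p * p.1 ^ r * p.2 ^ s = 0

/-- The weight of a codeword: the number of points where it does not vanish. -/
def hermitianWeight {F : Type*} [Field F] [Fintype F] [DecidableEq F]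
    (z : F × F → F) : ℕ :=
  (Finset.univ.filter (fun p : F × F => z p ≠ 0)).card



open Finset Polynomial

section Part0
variable {F : Type*} [Field F] [Fintype F] [DecidableEq F] (q : ℕ)

theorem frob_add (hq : IsPrimePow q) (hF : Fintype.card F = q ^ 2) :
    ∀ a b : F, (a + b) ^ q = a ^ q + b ^ q := by
  obtain ⟨p, k, hp, hk, hpk⟩ := hq
  haveI : Fact (Nat.Prime p) := ⟨hp.nat_prime⟩
  obtain ⟨cp, hcp⟩ := CharP.exists F
  haveI := hcp
  obtain ⟨n, hcp', hcard⟩ := FiniteField.card F cp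
  haveI : Fact (Nat.Prime cp) := ⟨hcp'⟩
  have hqq : cp ^ (n : ℕ) = p ^ (2 * k) := by
    rw [← hcard, hF, ← hpk, ← pow_mul, mul_comm k 2]
  have hcpp : cp = p := by
    have h1 : cp ∣ p ^ (2 * k) := hqq ▸ dvd_pow_self cp n.2.ne'
    exact (Nat.prime_dvd_prime_iff_eq hcp' hp.nat_prime).mp (hcp'.dvd_of_dvd_pow h1)
  subst hcpp
  intro a b
  rw [← hpk]
  exact add_pow_char_pow a b _ _

theorem frob_fix (hF : Fintype.card F = q ^ 2) : ∀ a : F, (a ^ q) ^ q = a := by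
  intro a
  rw [← pow_mul, ← sq, ← hF, FiniteField.pow_card]

end Part0

section Part0b
variable {F : Type*} [Field F] [Fintype F] [DecidableEq F] {q : ℕ}

theorem root_count_le (pol : F[X]) (hpol : pol ≠ 0) :
    (univ.filter fun x : F => pol.eval x = 0).card ≤ pol.natDegree := by
  calc (univ.filter fun x : F => pol.eval x = 0).card
      ≤ pol.roots.toFinset.card := by
        apply card_le_card
        intro x hx
        simp only [mem_filter, mem_univ, true_and] at hx
        simp [Multiset.mem_toFinset, mem_roots, hpol, IsRoot, hx]
    _ ≤ Multiset.card pol.roots := pol.roots.toFinset_card_le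
    _ ≤ pol.natDegree := pol.card_roots'

end Part0b

section Part0c
variable {F : Type*} [Field F] [Fintype F] [DecidableEq F] {q : ℕ}

theorem nat_mul_eq_of_le {a b c d : ℕ} (h : a * b = c * d) (h1 : a ≤ c) (h2 : b ≤ d)
    (hc : 0 < c) (hd : 0 < d) : a = c ∧ b = d := by
  have hb : b = d := by
    have : c * d ≤ c * b := by
      calc c * d = a * b := h.symm
      _ ≤ c * b := Nat.mul_le_mul_right b h1
    exact le_antisymm h2 (Nat.le_of_mul_le_mul_left this hc)
  subst hb
  refine ⟨?_, rfl⟩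
  have hb0 : 0 < b := lt_of_lt_of_le hd (le_refl _)
  exact Nat.eq_of_mul_eq_mul_right hb0 h

variable (hq2 : 2 ≤ q) (hfrob : ∀ a b : F, (a + b) ^ q = a ^ q + b ^ q)
  (hfix : ∀ a : F, (a ^ q) ^ q = a) (hF : Fintype.card F = q ^ 2)

include hq2 hfrob hfix hF

theorem frob_neg' : ∀ a : F, (-a) ^ q = -(a ^ q) := by
  intro a
  have h := hfrob a (-a)
  rw [add_neg_cancel, zero_pow (by omega)] at h
  linear_combination -h

theorem trace_norm_fibers :
    ((univ.filter fun β : F => β ^ q = β).card = q) ∧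
    (∀ β : F, β ^ q = β → (univ.filter fun y : F => y ^ q + y = β).card = q) ∧
    (∀ γ : F, γ ^ q = γ → γ ≠ 0 → (univ.filter fun u : F => u ^ (q + 1) = γ).card = q + 1) := by
  classical
  have hq0 : q ≠ 0 := by omega
  have hfneg : ∀ a : F, (-a) ^ q = -(a ^ q) := frob_neg' hq2 hfrob hfix hF
  have hfsub : ∀ a b : F, (a - b) ^ q = a ^ q - b ^ q := by
    intro a b; rw [sub_eq_add_neg, hfrob, hfneg, sub_eq_add_neg]
  set Tm : F → F := fun y => y ^ q + y with hTm
  set Kf : Finset F := univ.filter fun β : F => β ^ q = β with hKf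
  -- kernel of trace
  set kerT : Finset F := univ.filter fun y : F => Tm y = 0 with hkerT
  have hker_le : kerT.card ≤ q := by
    have hne : (X ^ q + X : F[X]) ≠ 0 := by
      intro hcon
      have := congrArg (fun pol => Polynomial.coeff pol q) hcon
      simp only [coeff_add, coeff_X_pow, if_pos rfl, coeff_X, coeff_zero] at this
      rw [if_neg (by omega : ¬ (1 = q))] at this
      simp at this
    have h := root_count_le (F := F) (X ^ q + X) hne
    have hdeg : (X ^ q + X : F[X]).natDegree ≤ q :=
      le_trans (natDegree_add_le _ _) (by rw [natDegree_X_pow, natDegree_X]; exact sup_le le_rfl (by omega))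
    have heq : kerT = univ.filter fun x : F => (X ^ q + X : F[X]).eval x = 0 := by
      ext y; simp [hTm, hkerT]
    rw [heq]
    exact le_trans h hdeg
  have hK_le : Kf.card ≤ q := by
    have h := root_count_le (F := F) (X ^ q - X) (FiniteField.X_pow_card_sub_X_ne_zero F (p := q) (by omega))
    refine le_trans (le_of_eq ?_) (le_trans h ?_)
    · congr 1; ext y; simp [hKf, sub_eq_zero]
    · exact le_trans (natDegree_sub_le _ _) (by simp [natDegree_X_pow, natDegree_X]; omega)
  -- trace image inside Kf
  have him_sub : univ.image Tm ⊆ Kf := by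
    intro β hβ
    obtain ⟨y, -, rfl⟩ := Finset.mem_image.mp hβ
    simp only [hKf, mem_filter, mem_univ, true_and, hTm]
    rw [hfrob, hfix, add_comm]
  -- fibers of trace are translates of kernel
  have hfib : ∀ β ∈ univ.image Tm,
      (univ.filter fun y : F => Tm y = β).card = kerT.card := by
    intro β hβ
    obtain ⟨y₀, -, rfl⟩ := Finset.mem_image.mp hβ
    rw [show (univ.filter fun y : F => Tm y = Tm y₀) = kerT.image (· + y₀) from ?_]
    · exact Finset.card_image_of_injective _ (add_left_injective y₀)
    ext z
    simp only [mem_filter, mem_univ, true_and, Finset.mem_image, hkerT]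
    constructor
    · intro hz
      exact ⟨z - y₀, by simp [hTm, hfsub]; linear_combination hz, by ring⟩
    · rintro ⟨w, hw, rfl⟩
      simp only [hTm, hfrob] at hw ⊢
      linear_combination hw
  have htot : (q : ℕ) ^ 2 = (univ.image Tm).card * kerT.card := by
    have := Finset.card_eq_sum_card_fiberwise
      (f := Tm) (s := (univ : Finset F)) (t := univ.image Tm)
      (fun x _ => Finset.mem_image_of_mem Tm (mem_univ x))
    rw [← hF]
    rw [Finset.card_univ] at this
    rw [this, Finset.sum_congr rfl hfib, Finset.sum_const, smul_eq_mul]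
  have him_le : (univ.image Tm).card ≤ q := le_trans (card_le_card him_sub) hK_le
  have hmain := nat_mul_eq_of_le (a := (univ.image Tm).card) (b := kerT.card)
    (c := q) (d := q) (by rw [← htot]; ring) him_le hker_le (by omega) (by omega)
  have him_eq : univ.image Tm = Kf :=
    Finset.eq_of_subset_of_card_le him_sub (by rw [hmain.1]; exact hK_le)
  have hKcard : Kf.card = q := by rw [← him_eq, hmain.1]
  have htrace : ∀ β : F, β ^ q = β → (univ.filter fun y : F => y ^ q + y = β).card = q := by
    intro β hβ
    have hβim : β ∈ univ.image Tm := him_eq ▸ (by simp [hKf, hβ])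
    have h2 := hfib β hβim
    rw [hmain.2] at h2
    simpa [hTm] using h2
  refine ⟨hKcard, htrace, ?_⟩
  -- norm part
  set Nm : F → F := fun u => u ^ (q + 1) with hNm
  set Fs : Finset F := univ.filter fun u : F => u ≠ 0 with hFs
  have hFscard : Fs.card = q ^ 2 - 1 := by
    rw [hFs, Finset.filter_ne', Finset.card_erase_of_mem (mem_univ 0), Finset.card_univ, hF]
  set KfS : Finset F := univ.filter fun β : F => β ^ q = β ∧ β ≠ 0 with hKfS
  have hKfScard : KfS.card = q - 1 := by
    have : KfS = Kf.erase 0 := by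
      ext β; simp [hKfS, hKf, Finset.mem_erase, and_comm]
    rw [this, Finset.card_erase_of_mem (by simp [hKf, zero_pow hq0]), hKcard]
  set kerN : Finset F := univ.filter fun u : F => u ^ (q + 1) = 1 with hkerN
  have hkerN_le : kerN.card ≤ q + 1 := by
    have h := root_count_le (F := F) (X ^ (q + 1) - C 1) (X_pow_sub_C_ne_zero (by omega) 1)
    refine le_trans (le_of_eq ?_) (le_trans h (le_of_eq (natDegree_X_pow_sub_C)))
    congr 1; ext y; simp [hkerN, sub_eq_zero]
  have himN_sub : Fs.image Nm ⊆ KfS := by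
    intro γ hγ
    obtain ⟨u, hu, rfl⟩ := Finset.mem_image.mp hγ
    simp only [hFs, mem_filter, mem_univ, true_and] at hu
    simp only [hKfS, mem_filter, mem_univ, true_and, hNm]
    constructor
    · rw [pow_succ, mul_pow, hfix]; exact mul_comm _ _
    · exact pow_ne_zero _ hu
  have hfibN : ∀ γ ∈ Fs.image Nm,
      (Fs.filter fun u : F => Nm u = γ).card = kerN.card := by
    intro γ hγ
    have hγK := himN_sub hγ
    simp only [hKfS, mem_filter, mem_univ, true_and] at hγK
    obtain ⟨u₀, hu₀, rfl⟩ := Finset.mem_image.mp hγ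
    simp only [hFs, mem_filter, mem_univ, true_and] at hu₀
    rw [show (Fs.filter fun u : F => Nm u = Nm u₀) = kerN.image (· * u₀) from ?_]
    · exact Finset.card_image_of_injective _ (mul_left_injective₀ hu₀)
    ext z
    simp only [hFs, Finset.filter_filter, mem_filter, mem_univ, true_and,
      Finset.mem_image, hkerN, hNm]
    constructor
    · intro ⟨hz0, hz⟩
      refine ⟨z / u₀, ?_, by field_simp⟩
      rw [div_pow, hz, div_self (pow_ne_zero _ hu₀)]
    · rintro ⟨w, hw, rfl⟩
      have hw0 : w ≠ 0 := by
        intro h; rw [h, zero_pow (by omega)] at hw; exact zero_ne_one hw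
      exact ⟨mul_ne_zero hw0 hu₀, by rw [mul_pow, hw, one_mul]⟩
  have htotN : q ^ 2 - 1 = (Fs.image Nm).card * kerN.card := by
    have := Finset.card_eq_sum_card_fiberwise
      (f := Nm) (s := Fs) (t := Fs.image Nm)
      (fun x hx => Finset.mem_image_of_mem Nm hx)
    rw [← hFscard, this, Finset.sum_congr rfl hfibN, Finset.sum_const, smul_eq_mul]
  have himN_le : (Fs.image Nm).card ≤ q - 1 := le_trans (card_le_card himN_sub) (le_of_eq hKfScard)
  have hmainN := nat_mul_eq_of_le (a := (Fs.image Nm).card) (b := kerN.card)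
    (c := q - 1) (d := q + 1) (by
      rw [← htotN]
      obtain ⟨m, rfl⟩ : ∃ m, q = m + 2 := ⟨q - 2, by omega⟩
      have hsq : (m + 2) ^ 2 = m * m + 4 * m + 4 := by ring
      have h2 : (m + 2 - 1) * (m + 2 + 1) = m * m + 4 * m + 3 := by
        rw [(by omega : m + 2 - 1 = m + 1)]; ring
      omega) himN_le hkerN_le (by omega) (by omega)
  have himN_eq : Fs.image Nm = KfS :=
    Finset.eq_of_subset_of_card_le himN_sub (by rw [hmainN.1, hKfScard])
  intro γ hγq hγ0
  have hγim : γ ∈ Fs.image Nm := himN_eq ▸ (by simp [hKfS, hγq, hγ0])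
  have h1 : (univ.filter fun u : F => u ^ (q + 1) = γ)
      = Fs.filter fun u : F => Nm u = γ := by
    ext u
    simp only [mem_filter, mem_univ, true_and, hFs, Finset.filter_filter, hNm]
    constructor
    · intro hu
      refine ⟨fun h0 => hγ0 ?_, hu⟩
      rw [h0, zero_pow (by omega)] at hu; exact hu.symm
    · exact fun h => h.2
  rw [h1, hfibN γ hγim, hmainN.2]

end Part0c

section PartH
variable {F : Type*} [Field F] [Fintype F] [DecidableEq F] {q : ℕ}

variable (hq2 : 2 ≤ q) (hfrob : ∀ a b : F, (a + b) ^ q = a ^ q + b ^ q)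
  (hfix : ∀ a : F, (a ^ q) ^ q = a) (hF : Fintype.card F = q ^ 2)

include hq2 hfrob hfix hF

theorem vert_line_card (c : F) :
    ((univ.filter (fun p : F × F => p.1 ^ (q + 1) = p.2 ^ q + p.2)).filter
      (fun p => p.1 = c)).card = q := by
  have hKmem : (c ^ (q + 1)) ^ q = c ^ (q + 1) := by
    rw [pow_succ, mul_pow, hfix]; exact mul_comm _ _
  have himg : ((univ.filter (fun p : F × F => p.1 ^ (q + 1) = p.2 ^ q + p.2)).filter
      (fun p => p.1 = c)) = (univ.filter fun y : F => y ^ q + y = c ^ (q + 1)).image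
        (fun y => (c, y)) := by
    ext p
    simp only [Finset.filter_filter, mem_filter, mem_univ, true_and, Finset.mem_image]
    constructor
    · rintro ⟨h1, rfl⟩
      exact ⟨p.2, h1.symm, rfl⟩
    · rintro ⟨y, hy, rfl⟩
      exact ⟨hy.symm, rfl⟩
  rw [himg, Finset.card_image_of_injective _ (fun y z h => (Prod.mk.injEq _ _ _ _).mp h |>.2),
    (trace_norm_fibers hq2 hfrob hfix hF).2.1 _ hKmem]

theorem graph_line_card (a b : F) :
    ((univ.filter (fun p : F × F => p.1 ^ (q + 1) = p.2 ^ q + p.2)).filter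
      (fun p => p.2 = a * p.1 + b)).card
      = if a ^ (q + 1) + b ^ q + b = 0 then 1 else q + 1 := by
  have hfneg : ∀ x : F, (-x) ^ q = -(x ^ q) := frob_neg' hq2 hfrob hfix hF
  have hfsub : ∀ x y : F, (x - y) ^ q = x ^ q - y ^ q := by
    intro x y; rw [sub_eq_add_neg, hfrob, hfneg, sub_eq_add_neg]
  set γ : F := a ^ (q + 1) + b ^ q + b with hγ
  have key : ∀ x : F, (x ^ (q + 1) = (a * x + b) ^ q + (a * x + b)) ↔
      ((x - a ^ q) ^ (q + 1) = γ) := by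
    intro x
    have e1 : (x - a ^ q) ^ (q + 1) = x ^ q * x - a ^ q * x ^ q - a * x + a ^ q * a := by
      rw [pow_succ, hfsub, hfix]; ring
    have e2 : (a * x + b) ^ q = a ^ q * x ^ q + b ^ q := by rw [hfrob, mul_pow]
    have e3 : x ^ (q + 1) = x ^ q * x := pow_succ x q
    have e4 : a ^ (q + 1) = a ^ q * a := pow_succ a q
    rw [e1, e2, e3, hγ, e4]
    constructor <;> intro h <;> linear_combination h
  have himg : ((univ.filter (fun p : F × F => p.1 ^ (q + 1) = p.2 ^ q + p.2)).filter
      (fun p => p.2 = a * p.1 + b))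
      = ((univ.filter fun u : F => u ^ (q + 1) = γ).image (· + a ^ q)).image
          (fun x => (x, a * x + b)) := by
    ext p
    simp only [Finset.filter_filter, mem_filter, mem_univ, true_and, Finset.mem_image]
    constructor
    · rintro ⟨h1, h2⟩
      refine ⟨p.1, ⟨p.1 - a ^ q, ?_, by ring⟩, ?_⟩
      · rw [(key p.1).mp (by rw [← h2]; exact h1)]
      · rw [← h2]
    · rintro ⟨x, ⟨u, hu, rfl⟩, rfl⟩
      refine ⟨?_, rfl⟩
      exact (key _).mpr (by rwa [add_sub_cancel_right])
  rw [himg, Finset.card_image_of_injective _ (fun y z h => (Prod.mk.injEq _ _ _ _).mp h |>.1),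
    Finset.card_image_of_injective _ (add_left_injective _)]
  by_cases hγ0 : γ = 0
  · rw [if_pos hγ0, hγ0]
    rw [show (univ.filter fun u : F => u ^ (q + 1) = 0) = {0} from ?_, Finset.card_singleton]
    ext u
    simp [pow_eq_zero_iff (by omega : q + 1 ≠ 0)]
  · rw [if_neg hγ0]
    have hKγ : γ ^ q = γ := by
      have h1 : (a ^ (q + 1)) ^ q = a ^ (q + 1) := by
        rw [pow_succ, mul_pow, hfix]; exact mul_comm _ _
      have h2 : (b ^ q + b) ^ q = b ^ q + b := by rw [hfrob, hfix, add_comm]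
      rw [hγ, add_assoc, hfrob, h1, h2]
    exact (trace_norm_fibers hq2 hfrob hfix hF).2.2 γ hKγ hγ0

theorem tangent_pairs_card :
    (univ.filter fun ab : F × F => ab.1 ^ (q + 1) + ab.2 ^ q + ab.2 = 0).card = q ^ 3 := by
  have hfneg : ∀ x : F, (-x) ^ q = -(x ^ q) := frob_neg' hq2 hfrob hfix hF
  have hcount := Finset.card_eq_sum_card_fiberwise
    (f := fun ab : F × F => ab.1)
    (s := univ.filter fun ab : F × F => ab.1 ^ (q + 1) + ab.2 ^ q + ab.2 = 0)
    (t := (univ : Finset F)) (fun x _ => mem_univ _)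
  rw [hcount]
  have hfib : ∀ a : F, ((univ.filter fun ab : F × F =>
      ab.1 ^ (q + 1) + ab.2 ^ q + ab.2 = 0).filter fun ab => ab.1 = a).card = q := by
    intro a
    have hKmem : (-(a ^ (q + 1))) ^ q = -(a ^ (q + 1)) := by
      rw [hfneg, pow_succ, mul_pow, hfix, mul_comm, ← pow_succ]
    have himg : ((univ.filter fun ab : F × F =>
        ab.1 ^ (q + 1) + ab.2 ^ q + ab.2 = 0).filter fun ab => ab.1 = a)
        = (univ.filter fun y : F => y ^ q + y = -(a ^ (q + 1))).image (fun y => (a, y)) := by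
      ext ab
      simp only [Finset.filter_filter, mem_filter, mem_univ, true_and, Finset.mem_image]
      constructor
      · rintro ⟨h1, rfl⟩
        exact ⟨ab.2, by linear_combination h1, rfl⟩
      · rintro ⟨y, hy, rfl⟩
        exact ⟨by linear_combination hy, rfl⟩
    rw [himg, Finset.card_image_of_injective _ (fun y z h => (Prod.mk.injEq _ _ _ _).mp h |>.2),
      (trace_norm_fibers hq2 hfrob hfix hF).2.1 _ hKmem]
  rw [Finset.sum_congr rfl (fun a _ => hfib a), Finset.sum_const, smul_eq_mul,
    Finset.card_univ, hF]
  ring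

end PartH

section PartG
variable {F : Type*} [Field F] [Fintype F] [DecidableEq F] {q : ℕ}

/-- Collinearity of a finite set of points in the plane. -/
def Collin (S : Finset (F × F)) : Prop :=
  ∃ u v w : F, (u ≠ 0 ∨ v ≠ 0) ∧ ∀ p ∈ S, u * p.1 + v * p.2 = w

/-- The lines of the affine plane, intersected with the Hermitian curve. -/
def lineF (q : ℕ) (F : Type*) [Field F] [Fintype F] [DecidableEq F] :
    F ⊕ F × F → Finset (F × F)
  | Sum.inl c => (univ.filter (fun p : F × F => p.1 ^ (q + 1) = p.2 ^ q + p.2)).filter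
      (fun p => p.1 = c)
  | Sum.inr ab => (univ.filter (fun p : F × F => p.1 ^ (q + 1) = p.2 ^ q + p.2)).filter
      (fun p => p.2 = ab.1 * p.1 + ab.2)

theorem mem_lineF_subset_H (L : F ⊕ F × F) :
    lineF q F L ⊆ univ.filter (fun p : F × F => p.1 ^ (q + 1) = p.2 ^ q + p.2) := by
  cases L with
  | inl c => exact Finset.filter_subset _ _
  | inr ab => exact Finset.filter_subset _ _

theorem collin_of_subset_lineF {S : Finset (F × F)} (L : F ⊕ F × F)
    (h : S ⊆ lineF q F L) : Collin S := by
  cases L with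
  | inl c =>
    refine ⟨1, 0, c, Or.inl one_ne_zero, fun p hp => ?_⟩
    have := h hp
    simp only [lineF, Finset.mem_filter] at this
    rw [this.2]; ring
  | inr ab =>
    refine ⟨ab.1, -1, -ab.2, Or.inr (neg_ne_zero.mpr one_ne_zero), fun p hp => ?_⟩
    have := h hp
    simp only [lineF, Finset.mem_filter] at this
    rw [this.2]; ring

theorem subset_lineF_of_collin {S : Finset (F × F)}
    (hH : S ⊆ univ.filter (fun p : F × F => p.1 ^ (q + 1) = p.2 ^ q + p.2))
    (hcol : Collin S) : ∃ L : F ⊕ F × F, S ⊆ lineF q F L := by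
  obtain ⟨u, v, w, hne, hall⟩ := hcol
  by_cases hv : v = 0
  · have hu : u ≠ 0 := by rcases hne with h | h; exact h; exact absurd hv h
    refine ⟨Sum.inl (u⁻¹ * w), fun p hp => ?_⟩
    simp only [lineF, Finset.mem_filter]
    refine ⟨Finset.mem_filter.mp (hH hp), ?_⟩
    have := hall p hp
    rw [hv] at this
    field_simp
    first
    | linear_combination this
    | linear_combination -this
  · refine ⟨Sum.inr (-u / v, w / v), fun p hp => ?_⟩
    simp only [lineF, Finset.mem_filter]
    refine ⟨Finset.mem_filter.mp (hH hp), ?_⟩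
    have := hall p hp
    field_simp
    first
    | linear_combination this
    | linear_combination -this
    | linear_combination v * this
    | linear_combination -(v * this)

theorem lineF_eq_of_two_mem {L₁ L₂ : F ⊕ F × F} {p p' : F × F} (hpp : p ≠ p')
    (h1 : p ∈ lineF q F L₁) (h1' : p' ∈ lineF q F L₁)
    (h2 : p ∈ lineF q F L₂) (h2' : p' ∈ lineF q F L₂) : L₁ = L₂ := by
  have key : ∀ (L : F ⊕ F × F), p ∈ lineF q F L → p' ∈ lineF q F L →
      (∀ c, L = Sum.inl c → p.1 = c ∧ p'.1 = c) ∧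
      (∀ ab : F × F, L = Sum.inr ab → p.2 = ab.1 * p.1 + ab.2 ∧ p'.2 = ab.1 * p'.1 + ab.2) := by
    intro L hp hp'
    cases L with
    | inl c =>
      simp only [lineF, Finset.mem_filter] at hp hp'
      refine ⟨fun c' hc' => ?_, fun ab hab => ?_⟩
      · cases hc'; exact ⟨hp.2, hp'.2⟩
      · simp at hab
    | inr ab =>
      simp only [lineF, Finset.mem_filter] at hp hp'
      refine ⟨fun c' hc' => ?_, fun ab' hab' => ?_⟩
      · simp at hc'
      · cases hab'; exact ⟨hp.2, hp'.2⟩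
  cases L₁ with
  | inl c =>
    obtain ⟨hc1, hc1'⟩ := (key _ h1 h1').1 c rfl
    cases L₂ with
    | inl c' =>
      obtain ⟨hc2, hc2'⟩ := (key _ h2 h2').1 c' rfl
      rw [← hc1, hc2]
    | inr ab =>
      obtain ⟨hg, hg'⟩ := (key _ h2 h2').2 ab rfl
      exfalso
      apply hpp
      have hx : p.1 = p'.1 := by rw [hc1, hc1']
      have hy : p.2 = p'.2 := by rw [hg, hg', hx]
      exact Prod.ext hx hy
  | inr ab =>
    obtain ⟨hg1, hg1'⟩ := (key _ h1 h1').2 ab rfl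
    cases L₂ with
    | inl c' =>
      obtain ⟨hc2, hc2'⟩ := (key _ h2 h2').1 c' rfl
      exfalso
      apply hpp
      have hx : p.1 = p'.1 := by rw [hc2, hc2']
      have hy : p.2 = p'.2 := by rw [hg1, hg1', hx]
      exact Prod.ext hx hy
    | inr ab' =>
      obtain ⟨hg2, hg2'⟩ := (key _ h2 h2').2 ab' rfl
      have hx : p.1 ≠ p'.1 := by
        intro hx
        exact hpp (Prod.ext hx (by rw [hg1, hg1', hx]))
      have ha : ab.1 = ab'.1 := by
        by_contra hcon
        apply hx
        have e1 : (ab.1 - ab'.1) * p.1 = ab'.2 - ab.2 := by linear_combination hg2 - hg1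
        have e2 : (ab.1 - ab'.1) * p'.1 = ab'.2 - ab.2 := by linear_combination hg2' - hg1'
        have hsub : ab.1 - ab'.1 ≠ 0 := sub_ne_zero_of_ne hcon
        field_simp at e1 e2
        have := e1.trans e2.symm
        exact mul_left_cancel₀ hsub this
      have hb : ab.2 = ab'.2 := by
        have := hg1.symm.trans hg2
        rw [ha] at this
        linear_combination this
      exact congrArg Sum.inr (Prod.ext ha hb)

open scoped Classical in
theorem collinear_subsets_card (hq2 : 2 ≤ q) (hd : 2 ≤ d)
    (hfrob : ∀ a b : F, (a + b) ^ q = a ^ q + b ^ q)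
    (hfix : ∀ a : F, (a ^ q) ^ q = a) (hF : Fintype.card F = q ^ 2) :
    (univ.filter fun S : Finset (F × F) =>
      S ⊆ univ.filter (fun p : F × F => p.1 ^ (q + 1) = p.2 ^ q + p.2) ∧
      S.card = d ∧ Collin S).card
      = q ^ 2 * Nat.choose q d + (q ^ 4 - q ^ 3) * Nat.choose (q + 1) d := by
  classical
  have hbi : (univ.filter fun S : Finset (F × F) =>
      S ⊆ univ.filter (fun p : F × F => p.1 ^ (q + 1) = p.2 ^ q + p.2) ∧
      S.card = d ∧ Collin S)
      = (univ : Finset (F ⊕ F × F)).biUnion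
          (fun L => (lineF q F L).powersetCard d) := by
    ext S
    simp only [Finset.mem_filter, mem_univ, true_and, Finset.mem_biUnion,
      Finset.mem_powersetCard]
    constructor
    · rintro ⟨hH, hcard, hcol⟩
      obtain ⟨L, hL⟩ := subset_lineF_of_collin hH hcol
      exact ⟨L, hL, hcard⟩
    · rintro ⟨L, hL, hcard⟩
      exact ⟨hL.trans (mem_lineF_subset_H L), hcard, collin_of_subset_lineF L hL⟩
  rw [hbi, Finset.card_biUnion]
  · have hsum : ∑ L : F ⊕ F × F, ((lineF q F L).powersetCard d).card
        = ∑ c : F, Nat.choose q d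
          + ∑ ab : F × F, Nat.choose (if ab.1 ^ (q + 1) + ab.2 ^ q + ab.2 = 0
              then 1 else q + 1) d := by
      rw [Fintype.sum_sum_type]
      congr 1
      · refine Finset.sum_congr rfl fun c _ => ?_
        rw [Finset.card_powersetCard]
        congr 1
        exact vert_line_card hq2 hfrob hfix hF c
      · refine Finset.sum_congr rfl fun ab _ => ?_
        rw [Finset.card_powersetCard]
        congr 1
        exact graph_line_card hq2 hfrob hfix hF ab.1 ab.2
    rw [hsum, Finset.sum_const, Finset.card_univ, hF, smul_eq_mul]
    congr 1
    have : ∀ ab : F × F, Nat.choose (if ab.1 ^ (q + 1) + ab.2 ^ q + ab.2 = 0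
        then 1 else q + 1) d
        = if ab.1 ^ (q + 1) + ab.2 ^ q + ab.2 = 0 then 0 else Nat.choose (q + 1) d := by
      intro ab
      split
      · exact Nat.choose_eq_zero_of_lt (by omega)
      · rfl
    rw [Finset.sum_congr rfl fun ab _ => this ab, Finset.sum_ite, Finset.sum_const,
      Finset.sum_const, smul_eq_mul, smul_eq_mul, mul_zero, zero_add]
    congr 1
    have htan := tangent_pairs_card hq2 hfrob hfix hF
    have htot : (univ.filter fun ab : F × F =>
        ab.1 ^ (q + 1) + ab.2 ^ q + ab.2 = 0).card
        + (univ.filter fun ab : F × F =>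
        ¬(ab.1 ^ (q + 1) + ab.2 ^ q + ab.2 = 0)).card = q ^ 4 := by
      rw [Finset.card_filter_add_card_filter_not, Finset.card_univ]
      rw [Fintype.card_prod, hF]
      ring
    omega
  · intro L₁ _ L₂ _ hne
    rw [Function.onFun, Finset.disjoint_left]
    intro S hS1 hS2
    rw [Finset.mem_powersetCard] at hS1 hS2
    obtain ⟨p, hp, p', hp', hpp⟩ := Finset.one_lt_card.mp (by omega : 1 < S.card)
    exact hne (lineF_eq_of_two_mem hpp (hS1.1 hp) (hS1.1 hp') (hS2.1 hp) (hS2.1 hp'))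

end PartG

section PartV
open Lagrange
variable {F : Type*} [Field F] {ι : Type*} [DecidableEq ι] {s : Finset ι} {v : ι → F}

theorem sum_eval_eq_zero {c : ι → F} {n : ℕ}
    (hps : ∀ k ≤ n, ∑ i ∈ s, c i * v i ^ k = 0) (g : F[X]) (hg : g.natDegree ≤ n) :
    ∑ i ∈ s, c i * g.eval (v i) = 0 := by
  have heval : ∀ x : F, g.eval x = ∑ k ∈ Finset.range (n + 1), g.coeff k * x ^ k :=
    fun x => Polynomial.eval_eq_sum_range' (by omega) x
  calc ∑ i ∈ s, c i * g.eval (v i)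
      = ∑ i ∈ s, ∑ k ∈ Finset.range (n + 1), g.coeff k * (c i * v i ^ k) := by
        refine Finset.sum_congr rfl fun i _ => ?_
        rw [heval, Finset.mul_sum]
        exact Finset.sum_congr rfl fun k _ => by ring
    _ = ∑ k ∈ Finset.range (n + 1), g.coeff k * ∑ i ∈ s, c i * v i ^ k := by
        rw [Finset.sum_comm]
        exact Finset.sum_congr rfl fun k _ => by rw [Finset.mul_sum]
    _ = 0 := by
        refine Finset.sum_eq_zero fun k hk => ?_
        rw [hps k (by simpa using Nat.lt_succ_iff.mp (Finset.mem_range.mp hk)), mul_zero]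

theorem nodalWeight_power_sum (hvs : Set.InjOn v s) (hs2 : 2 ≤ s.card)
    {k : ℕ} (hk : k ≤ s.card - 2) :
    ∑ i ∈ s, nodalWeight s v i * v i ^ k = 0 := by
  classical
  have hXk : (X ^ k : F[X]) = interpolate s v (fun i => v i ^ k) := by
    refine eq_interpolate_of_eval_eq _ hvs ?_ (fun i _ => by simp)
    rw [degree_X_pow]
    exact_mod_cast (by omega : k < s.card)
  have hco := congrArg (fun pol : F[X] => pol.coeff (s.card - 1)) hXk
  simp only [interpolate_apply] at hco
  rw [coeff_X_pow, if_neg (by omega)] at hco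
  rw [Polynomial.finset_sum_coeff] at hco
  have hterm : ∀ i ∈ s, (C (v i ^ k) * Lagrange.basis s v i).coeff (s.card - 1)
      = v i ^ k * nodalWeight s v i := by
    intro i hi
    rw [coeff_C_mul]
    congr 1
    rw [basis_eq_prod_sub_inv_mul_nodal_div hi, ← nodal_erase_eq_nodal_div hi, coeff_C_mul]
    have hnd : (nodal (s.erase i) v).natDegree = s.card - 1 := by
      rw [natDegree_nodal, Finset.card_erase_of_mem hi]
    rw [show s.card - 1 = (nodal (s.erase i) v).natDegree from hnd.symm,
      nodal_monic.coeff_natDegree, mul_one]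
  rw [Finset.sum_congr rfl hterm] at hco
  rw [Finset.sum_congr rfl (fun i (_ : i ∈ s) => mul_comm (nodalWeight s v i) (v i ^ k))]
  exact hco.symm

theorem kernel_vanish (hvs : Set.InjOn v s) (hs2 : 2 ≤ s.card) {c : ι → F}
    {m : ι} (hm : m ∈ s) (hcm : c m = 0)
    (hker : ∀ k ≤ s.card - 2, ∑ i ∈ s, c i * v i ^ k = 0) : ∀ i ∈ s, c i = 0 := by
  intro i hi
  by_cases him : i = m
  · rwa [him]
  have hi' : i ∈ s.erase m := Finset.mem_erase.mpr ⟨him, hi⟩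
  set g : F[X] := Lagrange.basis (s.erase m) v i with hg
  have hdeg : g.natDegree ≤ s.card - 2 := by
    rw [hg, natDegree_basis (hvs.mono (Finset.coe_subset.mpr (Finset.erase_subset m s))) hi',
      Finset.card_erase_of_mem hm]
    omega
  have h0 := sum_eval_eq_zero hker g hdeg
  have hsplit : ∑ j ∈ s, c j * g.eval (v j)
      = ∑ j ∈ s.erase m, c j * g.eval (v j) + c m * g.eval (v m) := by
    rw [Finset.sum_erase_add s _ hm]
  have hsingle : ∑ j ∈ s.erase m, c j * g.eval (v j) = c i := by
    rw [Finset.sum_eq_single_of_mem i hi']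
    · rw [hg, eval_basis_self (hvs.mono (Finset.coe_subset.mpr (Finset.erase_subset m s))) hi',
        mul_one]
    · intro j hj hji
      rw [hg, eval_basis_of_ne (Ne.symm hji) hj, mul_zero]
  rw [hsplit, hsingle, hcm, zero_mul, add_zero] at h0
  exact h0

theorem kernel_exists_lam (hvs : Set.InjOn v s) (hs2 : 2 ≤ s.card) {c : ι → F}
    (hker : ∀ k ≤ s.card - 2, ∑ i ∈ s, c i * v i ^ k = 0) :
    ∃ lam : F, ∀ i ∈ s, c i = lam * nodalWeight s v i := by
  classical
  obtain ⟨i₀, hi₀⟩ := Finset.card_pos.mp (by omega : 0 < s.card)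
  have hw₀ : nodalWeight s v i₀ ≠ 0 := nodalWeight_ne_zero hvs hi₀
  set lam : F := c i₀ / nodalWeight s v i₀ with hlam
  refine ⟨lam, fun i hi => ?_⟩
  set c' : ι → F := fun j => c j - lam * nodalWeight s v j with hc'
  have hker' : ∀ k ≤ s.card - 2, ∑ j ∈ s, c' j * v j ^ k = 0 := by
    intro k hk
    have h1 := hker k hk
    have h2 := nodalWeight_power_sum hvs hs2 hk
    calc ∑ j ∈ s, c' j * v j ^ k
        = ∑ j ∈ s, (c j * v j ^ k - lam * (nodalWeight s v j * v j ^ k)) := by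
          refine Finset.sum_congr rfl fun j _ => ?_; rw [hc']; ring
      _ = (∑ j ∈ s, c j * v j ^ k) - lam * ∑ j ∈ s, nodalWeight s v j * v j ^ k := by
          rw [Finset.sum_sub_distrib, Finset.mul_sum]
      _ = 0 := by rw [h1, h2, mul_zero, sub_zero]
  have hc'i₀ : c' i₀ = 0 := by
    rw [hc']
    simp only
    rw [hlam, div_mul_cancel₀ _ hw₀, sub_self]
  have := kernel_vanish hvs hs2 hi₀ hc'i₀ hker' i hi
  rw [hc'] at this
  simp only at this
  linear_combination this

end PartV

section PartS
variable {F : Type*} [Field F]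

/-- Functions spanned by monomials of total degree at most `k`. -/
def SpanMon (F : Type*) [Field F] (k : ℕ) : Submodule F ((F × F) → F) :=
  Submodule.span F {f | ∃ r s : ℕ, r + s ≤ k ∧ f = fun p => p.1 ^ r * p.2 ^ s}

theorem SpanMon_mono {j k : ℕ} (h : j ≤ k) : SpanMon F j ≤ SpanMon F k :=
  Submodule.span_mono (fun f ⟨r, s, hrs, hf⟩ => ⟨r, s, hrs.trans h, hf⟩)

theorem SpanMon_mul {j k : ℕ} {f g : (F × F) → F}
    (hf : f ∈ SpanMon F j) (hg : g ∈ SpanMon F k) : f * g ∈ SpanMon F (j + k) := by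
  have hmono : ∀ f₀ ∈ {f : (F × F) → F | ∃ r s : ℕ, r + s ≤ j ∧
      f = fun p => p.1 ^ r * p.2 ^ s}, ∀ g₀, g₀ ∈ SpanMon F k → f₀ * g₀ ∈ SpanMon F (j + k) := by
    rintro f₀ ⟨r, s, hrs, rfl⟩ g₀ hg₀
    refine Submodule.span_induction ?_ ?_ ?_ ?_ hg₀
    · rintro g₁ ⟨r', s', hrs', rfl⟩
      refine Submodule.subset_span ⟨r + r', s + s', by omega, ?_⟩
      funext p
      simp only [Pi.mul_apply]
      ring
    · have : (fun p : F × F => p.1 ^ r * p.2 ^ s) * 0 = 0 := by funext p; simp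
      rw [this]; exact Submodule.zero_mem _
    · intro g₁ g₂ _ _ h1 h2
      have : (fun p : F × F => p.1 ^ r * p.2 ^ s) * (g₁ + g₂)
          = (fun p : F × F => p.1 ^ r * p.2 ^ s) * g₁
            + (fun p : F × F => p.1 ^ r * p.2 ^ s) * g₂ := by
        funext p; simp [Pi.mul_apply]; ring
      rw [this]; exact Submodule.add_mem _ h1 h2
    · intro a g₁ _ h1
      have : (fun p : F × F => p.1 ^ r * p.2 ^ s) * (a • g₁)
          = a • ((fun p : F × F => p.1 ^ r * p.2 ^ s) * g₁) := by
        funext p; simp [Pi.mul_apply]; ring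
      rw [this]; exact Submodule.smul_mem _ a h1
  refine Submodule.span_induction ?_ ?_ ?_ ?_ hf
  · exact fun f₀ hf₀ => hmono f₀ hf₀ g hg
  · rw [zero_mul]; exact Submodule.zero_mem _
  · intro f₁ f₂ _ _ h1 h2
    rw [add_mul]; exact Submodule.add_mem _ h1 h2
  · intro a f₁ _ h1
    rw [smul_mul_assoc]; exact Submodule.smul_mem _ a h1

theorem SpanMon_affine (α β δ : F) :
    (fun p : F × F => α * p.1 + β * p.2 + δ) ∈ SpanMon F 1 := by
  have h10 : (fun p : F × F => p.1 ^ 1 * p.2 ^ 0) ∈ SpanMon F 1 :=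
    Submodule.subset_span ⟨1, 0, by omega, rfl⟩
  have h01 : (fun p : F × F => p.1 ^ 0 * p.2 ^ 1) ∈ SpanMon F 1 :=
    Submodule.subset_span ⟨0, 1, by omega, rfl⟩
  have h00 : (fun p : F × F => p.1 ^ 0 * p.2 ^ 0) ∈ SpanMon F 1 :=
    Submodule.subset_span ⟨0, 0, by omega, rfl⟩
  have heq : (fun p : F × F => α * p.1 + β * p.2 + δ)
      = α • (fun p : F × F => p.1 ^ 1 * p.2 ^ 0) + β • (fun p : F × F => p.1 ^ 0 * p.2 ^ 1)
        + δ • (fun p : F × F => p.1 ^ 0 * p.2 ^ 0) := by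
    funext p
    simp only [Pi.add_apply, Pi.smul_apply, smul_eq_mul]
    ring
  rw [heq]
  exact Submodule.add_mem _ (Submodule.add_mem _ (Submodule.smul_mem _ _ h10)
    (Submodule.smul_mem _ _ h01)) (Submodule.smul_mem _ _ h00)

theorem SpanMon_prod {ι : Type*} [DecidableEq ι] (T : Finset ι) (ℓ : ι → (F × F) → F)
    (h : ∀ i ∈ T, ℓ i ∈ SpanMon F 1) : (∏ i ∈ T, ℓ i) ∈ SpanMon F T.card := by
  induction T using Finset.cons_induction with
  | empty =>
    rw [Finset.prod_empty]
    have h1 : (1 : (F × F) → F) ∈ SpanMon F 0 := by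
      refine Submodule.subset_span ⟨0, 0, by omega, ?_⟩
      funext p; simp
    exact SpanMon_mono (Nat.zero_le _) h1
  | cons a T ha ih =>
    rw [Finset.prod_cons, Finset.card_cons]
    have h1 := h a (Finset.mem_cons_self a T)
    have h2 := ih (fun i hi => h i (Finset.mem_cons.mpr (Or.inr hi)))
    have := SpanMon_mul h1 h2
    rwa [add_comm 1 T.card] at this

theorem sum_SpanMon_eq_zero {S : Finset (F × F)} {z : (F × F) → F} {n : ℕ}
    (hz : ∀ r s : ℕ, r + s ≤ n → ∑ p ∈ S, z p * p.1 ^ r * p.2 ^ s = 0) :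
    ∀ f ∈ SpanMon F n, ∑ p ∈ S, z p * f p = 0 := by
  intro f hf
  refine Submodule.span_induction ?_ ?_ ?_ ?_ hf
  · rintro f₀ ⟨r, s, hrs, rfl⟩
    rw [← hz r s hrs]
    exact Finset.sum_congr rfl fun p _ => by ring
  · simp
  · intro f₁ f₂ _ _ h1 h2
    have : ∑ p ∈ S, z p * (f₁ + f₂) p = (∑ p ∈ S, z p * f₁ p) + ∑ p ∈ S, z p * f₂ p := by
      rw [← Finset.sum_add_distrib]
      exact Finset.sum_congr rfl fun p _ => by simp [mul_add]
    rw [this, h1, h2, add_zero]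
  · intro a f₁ _ h1
    have : ∑ p ∈ S, z p * (a • f₁) p = a * ∑ p ∈ S, z p * f₁ p := by
      rw [Finset.mul_sum]
      exact Finset.sum_congr rfl fun p _ => by simp [smul_eq_mul]; ring
    rw [this, h1, mul_zero]

theorem collin_of_kernel {d : ℕ} (hd : 2 ≤ d) {S : Finset (F × F)} (hcard : S.card = d)
    {z : (F × F) → F} (hz : ∀ r s : ℕ, r + s ≤ d - 2 → ∑ p ∈ S, z p * p.1 ^ r * p.2 ^ s = 0)
    (hsupp : ∀ p ∈ S, z p ≠ 0) : Collin S := by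
  classical
  by_contra hncol
  obtain ⟨m, hm⟩ := Finset.card_pos.mp (by omega : 0 < S.card)
  set T : Finset (F × F) := S.erase m with hT
  have hTcard : T.card = d - 1 := by rw [hT, Finset.card_erase_of_mem hm, hcard]
  have hclaim : ∃ p₁ ∈ T, ∃ p₂ ∈ T,
      (p₁.1 - m.1) * (p₂.2 - m.2) - (p₁.2 - m.2) * (p₂.1 - m.1) ≠ 0 := by
    by_contra hall
    push_neg at hall
    apply hncol
    obtain ⟨p₁, hp₁⟩ := Finset.card_pos.mp (by omega : 0 < T.card)
    have hp₁m : p₁ ≠ m := (Finset.mem_erase.mp hp₁).1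
    refine ⟨p₁.2 - m.2, m.1 - p₁.1, (p₁.2 - m.2) * m.1 + (m.1 - p₁.1) * m.2, ?_, ?_⟩
    · by_contra hcon
      push_neg at hcon
      apply hp₁m
      have h1 : p₁.2 = m.2 := by have := hcon.1; linear_combination this
      have h2 : p₁.1 = m.1 := by have := hcon.2; linear_combination -this
      exact Prod.ext h2 h1
    · intro p hp
      by_cases hpm : p = m
      · rw [hpm]
      · have hpT : p ∈ T := Finset.mem_erase.mpr ⟨hpm, hp⟩
        have := hall p₁ hp₁ p hpT
        linear_combination -this
  obtain ⟨p₁, hp₁, p₂, hp₂, hcross⟩ := hclaim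
  have hp12 : p₁ ≠ p₂ := by
    rintro rfl
    exact hcross (by ring)
  have hd3 : 3 ≤ d := by
    have : 2 ≤ T.card := Finset.one_lt_card.mpr ⟨p₁, hp₁, p₂, hp₂, hp12⟩
    omega
  -- the affine forms
  set ℓ₀ : (F × F) → F :=
    fun p => (p₂.1 - p₁.1) * (p.2 - p₁.2) - (p₂.2 - p₁.2) * (p.1 - p₁.1) with hℓ₀
  set ℓ : (F × F) → (F × F) → F :=
    fun x p => if x.1 = m.1 then p.2 - x.2 else p.1 - x.1 with hℓ
  set T' : Finset (F × F) := (T.erase p₁).erase p₂ with hT'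
  have hT'card : T'.card = d - 3 := by
    rw [hT', Finset.card_erase_of_mem
      (Finset.mem_erase.mpr ⟨hp12.symm, hp₂⟩), Finset.card_erase_of_mem hp₁, hTcard]
    omega
  set f : (F × F) → F := ℓ₀ * ∏ x ∈ T', ℓ x with hf
  have hfSpan : f ∈ SpanMon F (d - 2) := by
    have h0 : ℓ₀ ∈ SpanMon F 1 := by
      have : ℓ₀ = fun p : F × F => (-(p₂.2 - p₁.2)) * p.1 + (p₂.1 - p₁.1) * p.2
          + ((p₂.2 - p₁.2) * p₁.1 - (p₂.1 - p₁.1) * p₁.2) := by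
        funext p; rw [hℓ₀]; ring
      rw [this]
      exact SpanMon_affine _ _ _
    have h1 : ∀ x ∈ T', ℓ x ∈ SpanMon F 1 := by
      intro x _
      simp only [hℓ]
      by_cases hx : x.1 = m.1
      · simp only [if_pos hx]
        have : (fun p : F × F => p.2 - x.2)
            = fun p : F × F => (0 : F) * p.1 + 1 * p.2 + (-x.2) := by funext p; ring
        rw [this]; exact SpanMon_affine _ _ _
      · simp only [if_neg hx]
        have : (fun p : F × F => p.1 - x.1)
            = fun p : F × F => (1 : F) * p.1 + 0 * p.2 + (-x.1) := by funext p; ring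
        rw [this]; exact SpanMon_affine _ _ _
    have h2 := SpanMon_prod T' ℓ h1
    have h3 := SpanMon_mul h0 h2
    refine SpanMon_mono ?_ h3
    omega
  have hsum := sum_SpanMon_eq_zero hz f hfSpan
  have hfT : ∀ p ∈ T, f p = 0 := by
    intro p hp
    rw [hf]
    simp only [Pi.mul_apply]
    by_cases h1 : p = p₁
    · rw [h1, hℓ₀]; simp only; rw [show (p₂.1 - p₁.1) * (p₁.2 - p₁.2)
        - (p₂.2 - p₁.2) * (p₁.1 - p₁.1) = 0 by ring, zero_mul]
    by_cases h2 : p = p₂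
    · rw [h2, hℓ₀]; simp only; rw [show (p₂.1 - p₁.1) * (p₂.2 - p₁.2)
        - (p₂.2 - p₁.2) * (p₂.1 - p₁.1) = 0 by ring, zero_mul]
    have hpT' : p ∈ T' := Finset.mem_erase.mpr ⟨h2, Finset.mem_erase.mpr ⟨h1, hp⟩⟩
    rw [Finset.prod_apply, Finset.prod_eq_zero hpT', mul_zero]
    simp only [hℓ]
    by_cases hx : p.1 = m.1
    · simp only [if_pos hx]; ring
    · simp only [if_neg hx]; ring
  have hfm : f m ≠ 0 := by
    rw [hf]
    simp only [Pi.mul_apply]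
    refine mul_ne_zero ?_ ?_
    · rw [hℓ₀]
      intro h
      exact hcross (by linear_combination h)
    · rw [Finset.prod_apply]
      rw [Finset.prod_ne_zero_iff]
      intro x hx
      have hxT : x ∈ T := (Finset.mem_erase.mp (Finset.mem_erase.mp hx).2).2
      have hxm : x ≠ m := (Finset.mem_erase.mp hxT).1
      simp only [hℓ]
      by_cases hx1 : x.1 = m.1
      · simp only [if_pos hx1]
        refine sub_ne_zero_of_ne (fun h2 => hxm (Prod.ext hx1 h2.symm))
      · simp only [if_neg hx1]
        exact sub_ne_zero_of_ne (fun h2 => hx1 h2.symm)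
  rw [← Finset.sum_erase_add S _ hm] at hsum
  rw [Finset.sum_eq_zero (fun p hp => by rw [hfT p hp, mul_zero]), zero_add] at hsum
  exact mul_ne_zero (hsupp m hm) hfm hsum

end PartS

section PartF
open Lagrange
variable {F : Type*} [Field F] [Fintype F] [DecidableEq F] {q d : ℕ}

theorem collin_cases {S : Finset (F × F)} (hcol : Collin S) :
    (∃ c : F, ∀ p ∈ S, p.1 = c) ∨ (∃ a b : F, ∀ p ∈ S, p.2 = a * p.1 + b) := by
  obtain ⟨u, v, w, hne, hall⟩ := hcol
  by_cases hv : v = 0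
  · have hu : u ≠ 0 := by rcases hne with h | h; exact h; exact absurd hv h
    left
    refine ⟨u⁻¹ * w, fun p hp => ?_⟩
    have := hall p hp
    rw [hv] at this
    field_simp
    linear_combination this
  · right
    refine ⟨-u / v, w / v, fun p hp => ?_⟩
    have := hall p hp
    field_simp
    first
    | linear_combination this
    | linear_combination -this
    | linear_combination v * this
    | linear_combination -(v * this)

open scoped Classical in
theorem fiber_count_aux (hd : 2 ≤ d) (hF : Fintype.card F = q ^ 2)
    {S : Finset (F × F)} (hcard : S.card = d) (τ : F × F → F)
    (hinj : Set.InjOn τ S) :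
    ((univ : Finset ((F × F) → F)).filter (fun z =>
      univ.filter (fun p => z p ≠ 0) = S ∧
      ∀ k ≤ d - 2, ∑ p ∈ S, z p * τ p ^ k = 0)).card = q ^ 2 - 1 := by
  have hcard2 : 2 ≤ S.card := by omega
  obtain ⟨p₀, hp₀⟩ := Finset.card_pos.mp (by omega : 0 < S.card)
  set w₀ : (F × F) → F := fun p => if p ∈ S then nodalWeight S τ p else 0 with hw₀
  have hw₀p₀ : w₀ p₀ ≠ 0 := by
    rw [hw₀]; simp only [if_pos hp₀]; exact nodalWeight_ne_zero hinj hp₀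
  have himg : ((univ : Finset ((F × F) → F)).filter (fun z =>
      univ.filter (fun p => z p ≠ 0) = S ∧
      ∀ k ≤ d - 2, ∑ p ∈ S, z p * τ p ^ k = 0))
      = ((univ : Finset F).erase 0).image (fun lam => lam • w₀) := by
    ext z
    simp only [Finset.mem_filter, Finset.mem_univ, true_and, and_true, Finset.mem_image,
      Finset.mem_erase]
    constructor
    · rintro ⟨hsupp, hker⟩
      have hker' : ∀ k ≤ S.card - 2, ∑ p ∈ S, z p * τ p ^ k = 0 := by
        rw [hcard]; exact hker
      obtain ⟨lam, hlam⟩ := kernel_exists_lam hinj hcard2 hker'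
      have hzeq : z = lam • w₀ := by
        funext p
        by_cases hp : p ∈ S
        · rw [hlam p hp, hw₀]
          simp only [Pi.smul_apply, smul_eq_mul, if_pos hp]
        · have hz0 : z p = 0 := by
            by_contra hcon
            exact hp (hsupp ▸ Finset.mem_filter.mpr ⟨Finset.mem_univ p, hcon⟩)
          rw [hz0, hw₀]
          simp only [Pi.smul_apply, smul_eq_mul, if_neg hp, mul_zero]
      have hlam0 : lam ≠ 0 := by
        intro hcon
        have hmem : p₀ ∈ univ.filter (fun p => z p ≠ 0) := by rw [hsupp]; exact hp₀
        have hz0 := (Finset.mem_filter.mp hmem).2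
        apply hz0
        rw [hzeq, hcon]
        simp
      exact ⟨lam, hlam0, hzeq.symm⟩
    · rintro ⟨lam, hlam0, rfl⟩
      constructor
      · ext p
        simp only [Finset.mem_filter, Finset.mem_univ, true_and, Pi.smul_apply,
          smul_eq_mul, hw₀]
        by_cases hp : p ∈ S
        · simp only [if_pos hp]
          exact ⟨fun _ => hp, fun _ => mul_ne_zero hlam0 (nodalWeight_ne_zero hinj hp)⟩
        · simp only [if_neg hp, mul_zero]
          exact ⟨fun h => absurd rfl h, fun h => absurd h hp⟩
      · intro k hk
        have h1 : ∑ p ∈ S, (lam • w₀) p * τ p ^ k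
            = lam * ∑ p ∈ S, nodalWeight S τ p * τ p ^ k := by
          rw [Finset.mul_sum]
          refine Finset.sum_congr rfl fun p hp => ?_
          simp only [Pi.smul_apply, smul_eq_mul, hw₀, if_pos hp]
          ring
        rw [h1, nodalWeight_power_sum hinj hcard2 (by omega : k ≤ S.card - 2), mul_zero]
  rw [himg, Finset.card_image_of_injOn, Finset.card_erase_of_mem (Finset.mem_univ 0),
    Finset.card_univ, hF]
  intro a _ b _ hab
  have := congrFun hab p₀
  simp only [Pi.smul_apply, smul_eq_mul] at this
  exact mul_right_cancel₀ hw₀p₀ this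

open scoped Classical in
theorem fiber_count (hd : 2 ≤ d) (hF : Fintype.card F = q ^ 2)
    {S : Finset (F × F)} (hcard : S.card = d) (hcol : Collin S) :
    ((univ : Finset ((F × F) → F)).filter (fun z =>
      univ.filter (fun p => z p ≠ 0) = S ∧
      ∀ r s : ℕ, r + s ≤ d - 2 → ∑ p ∈ S, z p * p.1 ^ r * p.2 ^ s = 0)).card = q ^ 2 - 1 := by
  rcases collin_cases hcol with ⟨c, hc⟩ | ⟨a, b, hab⟩
  · -- vertical line, parameter is the second coordinate
    have hinj : Set.InjOn (fun p : F × F => p.2) S := by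
      intro p hp p' hp' h
      exact Prod.ext ((hc p hp).trans (hc p' hp').symm) h
    have hEq : ∀ z : (F × F) → F,
        (∀ r s : ℕ, r + s ≤ d - 2 → ∑ p ∈ S, z p * p.1 ^ r * p.2 ^ s = 0) ↔
        (∀ k ≤ d - 2, ∑ p ∈ S, z p * (fun p : F × F => p.2) p ^ k = 0) := by
      intro z
      constructor
      · intro h k hk
        have := h 0 k (by omega)
        simpa using this
      · intro h r s hrs
        have h1 : ∑ p ∈ S, z p * p.1 ^ r * p.2 ^ s
            = c ^ r * ∑ p ∈ S, z p * p.2 ^ s := by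
          rw [Finset.mul_sum]
          refine Finset.sum_congr rfl fun p hp => ?_
          rw [hc p hp]; ring
        rw [h1, h s (by omega), mul_zero]
    have := fiber_count_aux hd hF hcard (fun p : F × F => p.2) hinj
    rw [← this]
    congr 1
    ext z
    simp only [Finset.mem_filter, Finset.mem_univ, true_and]
    exact and_congr_right fun _ => by rw [hEq z]
  · -- graph line, parameter is the first coordinate
    have hinj : Set.InjOn (fun p : F × F => p.1) S := by
      intro p hp p' hp' h
      have h1 : p.1 = p'.1 := h
      exact Prod.ext h1 (by rw [hab p hp, hab p' hp', h1])
    have hEq : ∀ z : (F × F) → F,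
        (∀ r s : ℕ, r + s ≤ d - 2 → ∑ p ∈ S, z p * p.1 ^ r * p.2 ^ s = 0) ↔
        (∀ k ≤ d - 2, ∑ p ∈ S, z p * (fun p : F × F => p.1) p ^ k = 0) := by
      intro z
      constructor
      · intro h k hk
        have := h k 0 (by omega)
        simpa using this
      · intro h r s hrs
        set g : F[X] := X ^ r * (C a * X + C b) ^ s with hg
        have hgdeg : g.natDegree ≤ d - 2 := by
          refine le_trans (natDegree_mul_le) (le_trans (add_le_add
            (le_of_eq (natDegree_X_pow r)) (le_trans natDegree_pow_le ?_)) (by omega : r + s ≤ d - 2))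
          have h1 : (C a * X + C b : F[X]).natDegree ≤ 1 := by
            refine le_trans (natDegree_add_le _ _) ?_
            simp [natDegree_C]
            exact le_trans (natDegree_C_mul_le a X) (le_of_eq natDegree_X)
          calc s * (C a * X + C b : F[X]).natDegree ≤ s * 1 := Nat.mul_le_mul_left s h1
            _ = s := mul_one s
        have h0 := sum_eval_eq_zero (v := fun p : F × F => p.1) (c := z)
          (fun k hk => h k hk) g hgdeg
        rw [← h0]
        refine Finset.sum_congr rfl fun p hp => ?_
        rw [hg, hab p hp]
        simp only [eval_mul, eval_pow, eval_add, eval_C, eval_X]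
        ring
    have := fiber_count_aux hd hF hcard (fun p : F × F => p.1) hinj
    rw [← this]
    congr 1
    ext z
    simp only [Finset.mem_filter, Finset.mem_univ, true_and]
    exact and_congr_right fun _ => by rw [hEq z]

end PartF

theorem hermitian_arith (q d : ℕ) (hd : 2 ≤ d) (hdq : d ≤ q) (hq2 : 2 ≤ q) :
    d * ((q ^ 2 * Nat.choose q d + (q ^ 4 - q ^ 3) * Nat.choose (q + 1) d) * (q ^ 2 - 1))
      = q ^ 2 * (q ^ 2 - 1) * Nat.choose q (d - 1) * (q ^ 3 - d + 1) := by
  have hB : Nat.choose q d * d = Nat.choose q (d - 1) * (q - (d - 1)) := by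
    have h := Nat.choose_succ_right_eq q (d - 1)
    rwa [show d - 1 + 1 = d by omega] at h
  have hE : (q + 1) * Nat.choose q (d - 1) = Nat.choose (q + 1) d * d := by
    have h := Nat.add_one_mul_choose_eq q (d - 1)
    rwa [show d - 1 + 1 = d by omega] at h
  have hq3 : d ≤ q ^ 3 := le_trans hdq (Nat.le_self_pow three_ne_zero q)
  have h34 : q ^ 3 ≤ q ^ 4 := Nat.pow_le_pow_right (by omega) (by omega)
  have h12 : 1 ≤ q ^ 2 := Nat.one_le_pow _ _ (by omega)
  have hd1q : d - 1 ≤ q := by omega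
  have hd1 : 1 ≤ d := by omega
  zify [hd1, hd1q, h12, h34, hq3] at hB hE ⊢
  linear_combination ((q : ℤ) ^ 2 - 1) * (q : ℤ) ^ 2 * hB
    - ((q : ℤ) ^ 2 - 1) * ((q : ℤ) ^ 4 - (q : ℤ) ^ 3) * hE

section Assembly
open Finset

theorem stmt_14 (q d : ℕ) (hq : IsPrimePow q) (hd : 2 ≤ d) (hdq : d ≤ q)
    (F : Type*) [Field F] [Fintype F] [DecidableEq F] (hF : Fintype.card F = q ^ 2) :
    d * Nat.card {z : F × F → F // hermitianCodeword q d 0 z ∧ hermitianWeight z = d}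
      = q ^ 2 * (q ^ 2 - 1) * Nat.choose q (d - 1) * (q ^ 3 - d + 1) := by
  classical
  have hq2 : 2 ≤ q := hq.two_le
  have hfrob : ∀ a b : F, (a + b) ^ q = a ^ q + b ^ q := frob_add q hq hF
  have hfix : ∀ a : F, (a ^ q) ^ q = a := frob_fix q hF
  -- step 1 : subtype cardinality to Finset
  have h1 : Nat.card {z : F × F → F // hermitianCodeword q d 0 z ∧ hermitianWeight z = d}
      = ((univ : Finset ((F × F) → F)).filter
          (fun z => hermitianCodeword q d 0 z ∧ hermitianWeight z = d)).card := by
    rw [Nat.card_eq_fintype_card, Fintype.card_subtype]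
  -- step 2 : reformulation of the codeword predicate
  have h2 : ∀ z : (F × F) → F, (hermitianCodeword q d 0 z ∧ hermitianWeight z = d) ↔
      ((univ.filter (fun p => z p ≠ 0))
          ⊆ univ.filter (fun p : F × F => p.1 ^ (q + 1) = p.2 ^ q + p.2) ∧
        (univ.filter (fun p => z p ≠ 0)).card = d ∧
        ∀ r s : ℕ, r + s ≤ d - 2 →
          ∑ p ∈ univ.filter (fun p => z p ≠ 0), z p * p.1 ^ r * p.2 ^ s = 0) := by
    intro z
    constructor
    · rintro ⟨⟨hvan, hsum⟩, hw⟩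
      have hsub : (univ.filter (fun p => z p ≠ 0))
          ⊆ univ.filter (fun p : F × F => p.1 ^ (q + 1) = p.2 ^ q + p.2) := by
        intro p hp
        have hz := (Finset.mem_filter.mp hp).2
        refine Finset.mem_filter.mpr ⟨Finset.mem_univ p, ?_⟩
        by_contra hcon
        exact hz (hvan p hcon)
      refine ⟨hsub, hw, fun r s hrs => ?_⟩
      rw [Finset.sum_subset hsub (fun p _ hnp => ?_)]
      · exact hsum r s (Or.inl hrs)
      · have : ¬ z p ≠ 0 := fun hc => hnp (Finset.mem_filter.mpr ⟨Finset.mem_univ p, hc⟩)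
        push_neg at this
        rw [this, zero_mul, zero_mul]
    · rintro ⟨hsub, hcard, hsum⟩
      refine ⟨⟨fun p hp => ?_, fun r s hrs => ?_⟩, hcard⟩
      · by_contra hz
        have := (Finset.mem_filter.mp (hsub (Finset.mem_filter.mpr
          ⟨Finset.mem_univ p, hz⟩))).2
        exact hp this
      · rcases hrs with hrs | ⟨i, hi, -⟩
        · rw [← Finset.sum_subset hsub (fun p _ hnp => ?_)]
          · exact hsum r s hrs
          · have : ¬ z p ≠ 0 := fun hc => hnp (Finset.mem_filter.mpr ⟨Finset.mem_univ p, hc⟩)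
            push_neg at this
            rw [this, zero_mul, zero_mul]
        · omega
  rw [h1, Finset.filter_congr (fun z _ => by rw [h2 z])]
  -- step 3 : fiberwise over supports
  have h3 := Finset.card_eq_sum_card_fiberwise
    (f := fun z : (F × F) → F => univ.filter (fun p => z p ≠ 0))
    (s := (univ : Finset ((F × F) → F)).filter (fun z =>
      (univ.filter (fun p => z p ≠ 0))
          ⊆ univ.filter (fun p : F × F => p.1 ^ (q + 1) = p.2 ^ q + p.2) ∧
        (univ.filter (fun p => z p ≠ 0)).card = d ∧
        ∀ r s : ℕ, r + s ≤ d - 2 →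
          ∑ p ∈ univ.filter (fun p => z p ≠ 0), z p * p.1 ^ r * p.2 ^ s = 0))
    (t := univ.filter (fun S : Finset (F × F) =>
      S ⊆ univ.filter (fun p : F × F => p.1 ^ (q + 1) = p.2 ^ q + p.2) ∧
      S.card = d ∧ Collin S))
    (by
      intro z hz
      obtain ⟨hsub, hcard, hsum⟩ := (Finset.mem_filter.mp hz).2
      refine Finset.mem_filter.mpr ⟨Finset.mem_univ _, hsub, hcard, ?_⟩
      exact collin_of_kernel hd hcard hsum (fun p hp => (Finset.mem_filter.mp hp).2))
  rw [h3]
  -- step 4 : every fiber has q^2 - 1 elements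
  have h4 : ∀ S ∈ univ.filter (fun S : Finset (F × F) =>
      S ⊆ univ.filter (fun p : F × F => p.1 ^ (q + 1) = p.2 ^ q + p.2) ∧
      S.card = d ∧ Collin S),
      (((univ : Finset ((F × F) → F)).filter (fun z =>
        (univ.filter (fun p => z p ≠ 0))
            ⊆ univ.filter (fun p : F × F => p.1 ^ (q + 1) = p.2 ^ q + p.2) ∧
          (univ.filter (fun p => z p ≠ 0)).card = d ∧
          ∀ r s : ℕ, r + s ≤ d - 2 →
            ∑ p ∈ univ.filter (fun p => z p ≠ 0), z p * p.1 ^ r * p.2 ^ s = 0)).filter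
        (fun z => univ.filter (fun p => z p ≠ 0) = S)).card = q ^ 2 - 1 := by
    intro S hS
    obtain ⟨hSsub, hScard, hScol⟩ := (Finset.mem_filter.mp hS).2
    rw [Finset.filter_filter]
    rw [Finset.filter_congr (q := fun z : (F × F) → F =>
      univ.filter (fun p => z p ≠ 0) = S ∧
      ∀ r s : ℕ, r + s ≤ d - 2 → ∑ p ∈ S, z p * p.1 ^ r * p.2 ^ s = 0)
      (fun z _ => ?_)]
    · exact fiber_count hd hF hScard hScol
    · constructor
      · rintro ⟨⟨-, -, hsum⟩, hsupp⟩
        exact ⟨hsupp, fun r s hrs => by rw [← hsupp]; exact hsum r s hrs⟩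
      · rintro ⟨hsupp, hsum⟩
        exact ⟨⟨by rw [hsupp]; exact hSsub, by rw [hsupp]; exact hScard,
          fun r s hrs => by rw [hsupp]; exact hsum r s hrs⟩, hsupp⟩
  rw [Finset.sum_congr rfl h4, Finset.sum_const, smul_eq_mul]
  -- step 5 : number of collinear subsets
  rw [collinear_subsets_card hq2 hd hfrob hfix hF]
  -- step 6 : arithmetic
  exact hermitian_arith q d hd hdq hq2

end Assembly
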